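/- Suppose c₁ ∈ C₁ and c₂ ∈ C₂ are k-ary connectives and (λ,μ) is an admissible fibring pair such that λ is a matrix isomorphism from the {c₁}-fragment of M₁ to the {c₂}-fragment of M₂ (λ bijective, commuting with the truth-functions c₁, c₂, and preserving/reflecting designatedness) with μ = λ⁻¹. Then (λ,μ) identifies c₁ with c₂: for all (c₁,c₂)-associated formulas φ₁, φ₂ in L(C₁⊎C₂) and every assignment ā of values in A₁⊎A₂, φ₁(ā) ∈ D₁⊎D₂ if and only if φ₂(ā) ∈ D₁⊎D₂. -/
import Mathlib


set_option autoImplicit false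

namespace Fibring

/-- Propositional formulas over a signature `C` with arity function `ar`. -/
inductive Fm (C : Type) (ar : C → ℕ) : Type
  | var : ℕ → Fm C ar
  | app : (c : C) → (Fin (ar c) → Fm C ar) → Fm C ar

/-- Homomorphic extension of a valuation `v` to all formulas, relative to an
interpretation `I` of the connectives. -/
def eval {C A : Type} {ar : C → ℕ}
    (I : (c : C) → (Fin (ar c) → A) → A) (v : ℕ → A) : Fm C ar → A
  | .var n => v n
  | .app c args => I c fun i => eval I v (args i)

/-- Matrix consequence relation. -/
def Mdl {C A : Type} {ar : C → ℕ}
    (I : (c : C) → (Fin (ar c) → A) → A) (D : Set A)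
    (Γ : Set (Fm C ar)) (φ : Fm C ar) : Prop :=
  ∀ v : ℕ → A, (∀ ψ ∈ Γ, eval I v ψ ∈ D) → eval I v φ ∈ D

/-- Substitution. -/
def subst {C : Type} {ar : C → ℕ} (σ : ℕ → Fm C ar) : Fm C ar → Fm C ar
  | .var n => σ n
  | .app c args => .app c fun i => subst σ (args i)

variable {C₁ C₂ A₁ A₂ : Type} {ar₁ : C₁ → ℕ} {ar₂ : C₂ → ℕ}

/-- The coercion `∗_μ : A₁ ⊎ A₂ → A₁`. -/
def starMu (mu : A₂ → A₁) : A₁ ⊕ A₂ → A₁ := Sum.elim id mu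

/-- The coercion `∗_λ : A₁ ⊎ A₂ → A₂`. -/
def starLa (lam : A₁ → A₂) : A₁ ⊕ A₂ → A₂ := Sum.elim lam id

/-- Interpretation of the fibred matrix `M_(λ,μ)`. -/
def fibInterp (I₁ : (c : C₁) → (Fin (ar₁ c) → A₁) → A₁)
    (I₂ : (c : C₂) → (Fin (ar₂ c) → A₂) → A₂)
    (lam : A₁ → A₂) (mu : A₂ → A₁) :
    (c : C₁ ⊕ C₂) → (Fin (Sum.elim ar₁ ar₂ c) → A₁ ⊕ A₂) → A₁ ⊕ A₂
  | .inl c, args => Sum.inl (I₁ c fun i => starMu mu (args i))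
  | .inr c, args => Sum.inr (I₂ c fun i => starLa lam (args i))

/-- Designated values of the fibred matrix: `D₁ ⊎ D₂`. -/
def Dfib (D₁ : Set A₁) (D₂ : Set A₂) : Set (A₁ ⊕ A₂) :=
  Sum.inl '' D₁ ∪ Sum.inr '' D₂

/-- Admissible fibring pairs: `λ` and `μ` preserve and reflect designatedness. -/
def Admissible (D₁ : Set A₁) (D₂ : Set A₂) (lam : A₁ → A₂) (mu : A₂ → A₁) : Prop :=
  (∀ x, lam x ∈ D₂ ↔ x ∈ D₁) ∧ (∀ y, mu y ∈ D₁ ↔ y ∈ D₂)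

/-- Recursive extension of a simple fibred valuation to the fibred language. -/
def sfvExt (I₁ : (c : C₁) → (Fin (ar₁ c) → A₁) → A₁)
    (I₂ : (c : C₂) → (Fin (ar₂ c) → A₂) → A₂)
    (lam : A₁ → A₂) (mu : A₂ → A₁) (v : ℕ → A₁ ⊕ A₂) :
    Fm (C₁ ⊕ C₂) (Sum.elim ar₁ ar₂) → A₁ ⊕ A₂
  | .var n => v n
  | .app (.inl c) args =>
      Sum.inl (I₁ c fun i => starMu mu (sfvExt I₁ I₂ lam mu v (args i)))
  | .app (.inr c) args =>
      Sum.inr (I₂ c fun i => starLa lam (sfvExt I₁ I₂ lam mu v (args i)))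

/-- Inclusion of `L(C₁)` into the fibred language `L(C₁ ⊎ C₂)`. -/
def inj₁ (ar₂ : C₂ → ℕ) : Fm C₁ ar₁ → Fm (C₁ ⊕ C₂) (Sum.elim ar₁ ar₂)
  | .var n => .var n
  | .app c args => .app (Sum.inl c) fun i => inj₁ ar₂ (args i)

/-- `Repl c₁ c₂ h φ ψ`: `ψ` results from `φ` by replacing exactly one occurrence
of `c₁` by `c₂`. -/
inductive Repl {C : Type} {ar : C → ℕ} (c₁ c₂ : C) (h : ar c₁ = ar c₂) :
    Fm C ar → Fm C ar → Prop
  | top (args : Fin (ar c₁) → Fm C ar) :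
      Repl c₁ c₂ h (.app c₁ args) (.app c₂ fun i => args (Fin.cast h.symm i))
  | congr (c : C) (args args' : Fin (ar c) → Fm C ar) (j : Fin (ar c))
      (hj : Repl c₁ c₂ h (args j) (args' j))
      (hother : ∀ i, i ≠ j → args i = args' i) :
      Repl c₁ c₂ h (.app c args) (.app c args')

/-- `(c₁,c₂)`-associated formulas: a finite chain of single replacements of
`c₁` by `c₂` or vice versa (including equality). -/
def Assoc {C : Type} {ar : C → ℕ} (c₁ c₂ : C) (h : ar c₁ = ar c₂)
    (φ₁ φ₂ : Fm C ar) : Prop :=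
  Relation.EqvGen (Repl c₁ c₂ h) φ₁ φ₂


/-- if `(λ,μ)` is admissible and `λ` is a matrix isomorphism
between the `{c₁}`- and `{c₂}`-fragments with `μ = λ⁻¹`, then `(λ,μ)`
identifies `c₁` with `c₂` in the fibred matrix. -/
theorem fibring_identifies_connectives
    {C₁ C₂ A₁ A₂ : Type} {ar₁ : C₁ → ℕ} {ar₂ : C₂ → ℕ}
    (I₁ : (c : C₁) → (Fin (ar₁ c) → A₁) → A₁)
    (I₂ : (c : C₂) → (Fin (ar₂ c) → A₂) → A₂)
    (D₁ : Set A₁) (D₂ : Set A₂)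
    (c₁ : C₁) (c₂ : C₂) (h : ar₁ c₁ = ar₂ c₂)
    (lam : A₁ → A₂) (mu : A₂ → A₁)
    (hadm : Admissible D₁ D₂ lam mu)
    (hbij : Function.Bijective lam)
    (hhom : ∀ args : Fin (ar₁ c₁) → A₁,
      lam (I₁ c₁ args) = I₂ c₂ fun i => lam (args (Fin.cast h.symm i)))
    (hinv₁ : Function.LeftInverse mu lam)
    (hinv₂ : Function.RightInverse mu lam)
    (φ₁ φ₂ : Fm (C₁ ⊕ C₂) (Sum.elim ar₁ ar₂))
    (hassoc : Assoc (Sum.inl c₁) (Sum.inr c₂) h φ₁ φ₂)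
    (v : ℕ → A₁ ⊕ A₂) :
    eval (fibInterp I₁ I₂ lam mu) v φ₁ ∈ Dfib D₁ D₂ ↔
      eval (fibInterp I₁ I₂ lam mu) v φ₂ ∈ Dfib D₁ D₂ := by
  obtain ⟨had₁, had₂⟩ := hadm
  set F := fibInterp I₁ I₂ lam mu with hF
  -- coercions are compatible with `lam`
  have hSL : ∀ x : A₁ ⊕ A₂, starLa lam x = lam (starMu mu x) := by
    intro x
    cases x with
    | inl a => rfl
    | inr b => simp [starLa, starMu, hinv₂ b]
  -- a single replacement does not change the `A₁`-coercion of the value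
  have key : ∀ φ ψ, Repl (Sum.inl c₁) (Sum.inr c₂) h φ ψ →
      starMu mu (eval F v φ) = starMu mu (eval F v ψ) := by
    intro φ ψ hrep
    induction hrep with
    | top args =>
        show starMu mu (Sum.inl (I₁ c₁ fun i => starMu mu (eval F v (args i))))
          = starMu mu (Sum.inr (I₂ c₂ fun i =>
              starLa lam (eval F v (args (Fin.cast h.symm i)))))
        simp only [starMu, Sum.elim_inl, Sum.elim_inr, id_eq, hSL]
        exact (hinv₁ _).symm.trans
          (congrArg mu (hhom fun i => starMu mu (eval F v (args i))))
    | congr c args args' j hj hother ih =>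
        cases c with
        | inl c =>
            show starMu mu (Sum.inl (I₁ c fun i => starMu mu (eval F v (args i))))
              = starMu mu (Sum.inl (I₁ c fun i => starMu mu (eval F v (args' i))))
            simp only [starMu, Sum.elim_inl, id_eq]
            congr 1
            funext i
            by_cases hij : i = j
            · subst hij; exact ih
            · rw [hother i hij]
        | inr c =>
            show starMu mu (Sum.inr (I₂ c fun i => starLa lam (eval F v (args i))))
              = starMu mu (Sum.inr (I₂ c fun i => starLa lam (eval F v (args' i))))
            simp only [starMu, Sum.elim_inr]
            congr 2
            funext i
            by_cases hij : i = j
            · subst hij; rw [hSL, hSL, ih]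
            · rw [hother i hij]
  -- extend to chains of replacements
  have chain : starMu mu (eval F v φ₁) = starMu mu (eval F v φ₂) := by
    induction hassoc with
    | rel a b hab => exact key a b hab
    | refl a => rfl
    | symm a b _ ih => exact ih.symm
    | trans a b c _ _ ih₁ ih₂ => exact ih₁.trans ih₂
  -- designatedness is determined by the `A₁`-coercion
  have hD : ∀ x : A₁ ⊕ A₂, x ∈ Dfib D₁ D₂ ↔ starMu mu x ∈ D₁ := by
    intro x
    cases x with
    | inl a =>
        simp [Dfib, starMu]
    | inr b =>
        simp [Dfib, starMu, had₂ b]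
  rw [hD, hD, chain]

end Fibring
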